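/- The number of standard Young tableaux of shape λ equals |λ|!/h_λ, where h_λ is the product of the hook lengths of λ (Frame–Robinson–Thrall hook length formula). -/

import Mathlib

/-- The hook length of the (0-indexed) box `c = (i,j)` of a Young diagram `μ`:
the number of boxes to its right in its row, below it in its column, plus `1`;
equivalently `μ.rowLen i + μ.colLen j - (i + j + 1)`. -/
def hookLength (μ : YoungDiagram) (c : ℕ × ℕ) : ℕ :=
  μ.rowLen c.1 + μ.colLen c.2 - (c.1 + c.2 + 1)

/-- The product of the hook lengths of a Young diagram. -/
def ydHookProd (μ : YoungDiagram) : ℕ :=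
  ∏ c ∈ μ.cells, hookLength μ c

open Polynomial Finset

namespace HLF


lemma degC_mul_lt {a : ℚ} {p : ℚ[X]} {n : WithBot ℕ} (h : p.degree < n) :
    (C a * p).degree < n :=
  lt_of_le_of_lt (le_trans (degree_mul_le _ _)
    (by simpa using add_le_add degree_C_le (le_refl p.degree))) h

lemma degX_mul_lt {p : ℚ[X]} {n : ℕ} (h : p.degree < (n : WithBot ℕ)) :
    (X * p).degree < ((n+1 : ℕ) : WithBot ℕ) := by
  rcases eq_or_ne p 0 with rfl | h0
  · simpa using WithBot.bot_lt_coe (n+1)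
  · rw [degree_eq_natDegree h0] at h
    rw [degree_mul, degree_X, degree_eq_natDegree h0]
    have hd : p.natDegree < n := by exact_mod_cast h
    have h1 : (1 + (p.natDegree : WithBot ℕ)) = ((p.natDegree + 1 : ℕ) : WithBot ℕ) := by
      push_cast; ring
    rw [h1]
    exact_mod_cast by omega

/-- second elementary symmetric-ish quantity -/
noncomputable def e2 (s : Finset ℕ) (y : ℕ → ℚ) : ℚ :=
  ((∑ j ∈ s, y j)^2 - ∑ j ∈ s, (y j)^2) / 2

lemma prodXsubC_expand (y : ℕ → ℚ) (s : Finset ℕ) :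
    ∃ R : ℚ[X], R.degree < (s.card : WithBot ℕ) ∧
      X^2 * ∏ j ∈ s, (X - C (y j)) =
        X^(s.card+2) - C (∑ j ∈ s, y j) * X^(s.card+1)
          + C (e2 s y) * X^(s.card) + R := by
  classical
  induction s using Finset.induction_on with
  | empty =>
      refine ⟨0, by simpa using WithBot.bot_lt_coe _, by simp [e2]⟩
  | @insert a s ha ih =>
      obtain ⟨R, hRdeg, hR⟩ := ih
      refine ⟨X*R - C (y a * e2 s y) * X^s.card - C (y a) * R, ?_, ?_⟩
      · rw [card_insert_of_notMem ha]
        have h1 : (X*R).degree < ((s.card+1 : ℕ) : WithBot ℕ) := degX_mul_lt hRdeg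
        have h2 : (C (y a * e2 s y) * X^s.card).degree < ((s.card+1 : ℕ) : WithBot ℕ) :=
          lt_of_le_of_lt (degree_C_mul_X_pow_le _ _) (by exact_mod_cast Nat.lt_succ_self _)
        have h3 : (C (y a) * R).degree < ((s.card+1 : ℕ) : WithBot ℕ) :=
          degC_mul_lt (lt_of_lt_of_le hRdeg (by exact_mod_cast Nat.le_succ _))
        exact lt_of_le_of_lt (degree_sub_le _ _)
          (max_lt (lt_of_le_of_lt (degree_sub_le _ _) (max_lt h1 h2)) h3)
      · rw [prod_insert ha, card_insert_of_notMem ha, sum_insert ha]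
        have he2 : e2 (insert a s) y = e2 s y + y a * ∑ j ∈ s, y j := by
          rw [e2, e2, sum_insert ha, sum_insert ha]; ring
        have key : X^2 * ((X - C (y a)) * ∏ j ∈ s, (X - C (y j)))
            = (X - C (y a)) * (X^2 * ∏ j ∈ s, (X - C (y j))) := by ring
        rw [key, hR, he2]
        simp only [C_add, C_mul]
        ring

lemma basis_coeff {k : ℕ} (x : ℕ → ℚ) {a : ℕ} (ha : a ∈ range k) :
    (Lagrange.basis (range k) x a).coeff (k-1)
      = ∏ j ∈ (range k).erase a, (x a - x j)⁻¹ := by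
  rw [Lagrange.basis]
  simp only [Lagrange.basisDivisor]
  rw [prod_mul_distrib, ← map_prod, coeff_C_mul]
  have hm : (∏ j ∈ (range k).erase a, (X - C (x j))).Monic :=
    monic_prod_of_monic _ _ (fun j _ => monic_X_sub_C _)
  have hdeg : (∏ j ∈ (range k).erase a, (X - C (x j))).natDegree = k - 1 := by
    rw [natDegree_prod_of_monic _ _ (fun j _ => monic_X_sub_C _)]
    simp [card_erase_of_mem ha]
  rw [← hdeg, hm.coeff_natDegree, mul_one]

lemma coeff_eq_sum {k : ℕ} (x : ℕ → ℚ) (hx : Set.InjOn x (range k))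
    {S : ℚ[X]} (hS : S.degree < (k : WithBot ℕ)) :
    S.coeff (k-1) = ∑ a ∈ range k, S.eval (x a) * ∏ j ∈ (range k).erase a, (x a - x j)⁻¹ := by
  have hrep := Lagrange.eq_interpolate hx (by rwa [card_range])
  conv_lhs => rw [hrep]
  rw [Lagrange.interpolate_apply, finset_sum_coeff]
  refine sum_congr rfl fun a ha => ?_
  rw [coeff_C_mul, basis_coeff x ha]

lemma corner_sum_identity (k : ℕ) (x : ℕ → ℚ) (hx : Set.InjOn x (range k)) :
    ∑ a ∈ range k, x a * ∏ j ∈ (range k).erase a, ((x a - x j - 1) / (x a - x j))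
      = (∑ a ∈ range k, x a) - k*(k-1)/2 := by
  rcases Nat.eq_zero_or_pos k with rfl | hk
  · simp
  set P : ℚ[X] := ∏ j ∈ range k, (X - C (x j)) with hPdef
  set Pc : ℚ[X] := ∏ j ∈ range k, (X - C (x j + 1)) with hPcdef
  set S : ℚ[X] := X * Pc - (X - C (k:ℚ)) * P with hSdef
  obtain ⟨R, hRdeg, hR⟩ := prodXsubC_expand x (range k)
  obtain ⟨R', hR'deg, hR'⟩ := prodXsubC_expand (fun j => x j + 1) (range k)
  rw [card_range] at hRdeg hR hR'deg hR'
  set e1 : ℚ := ∑ j ∈ range k, x j with he1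
  set cc : ℚ := e2 (range k) (fun j => x j + 1) - e2 (range k) x - k * e1 with hcc
  set R'' : ℚ[X] := X * R' - X * R + C ((k:ℚ) * e2 (range k) x) * X^k + C (k:ℚ) * R with hR''
  have h1 : (∑ j ∈ range k, (x j + 1)) = e1 + k := by
    rw [sum_add_distrib]; simp [he1]
  have hXXS : X^2 * S = C cc * X^(k+1) + R'' := by
    have step : X^2*S = X * (X^2 * Pc) - (X - C (k:ℚ)) * (X^2 * P) := by rw [hSdef]; ring
    rw [step, hR, hR', h1, hcc, hR'']
    simp only [C_add, C_mul, C_sub]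
    push_cast
    ring
  have hR''deg : R''.degree < ((k+1 : ℕ) : WithBot ℕ) := by
    have d1 : (X*R').degree < ((k+1:ℕ) : WithBot ℕ) := degX_mul_lt hR'deg
    have d2 : (X*R).degree < ((k+1:ℕ) : WithBot ℕ) := degX_mul_lt hRdeg
    have d3 : (C ((k:ℚ) * e2 (range k) x) * X^k).degree < ((k+1:ℕ) : WithBot ℕ) :=
      lt_of_le_of_lt (degree_C_mul_X_pow_le _ _) (by exact_mod_cast Nat.lt_succ_self _)
    have d4 : (C (k:ℚ) * R).degree < ((k+1:ℕ) : WithBot ℕ) :=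
      degC_mul_lt (lt_of_lt_of_le hRdeg (by exact_mod_cast Nat.le_succ _))
    rw [hR'']
    exact lt_of_le_of_lt (degree_add_le _ _)
      (max_lt (lt_of_le_of_lt (degree_add_le _ _)
        (max_lt (lt_of_le_of_lt (degree_sub_le _ _) (max_lt d1 d2)) d3)) d4)
  have hSdeg : S.degree < (k : WithBot ℕ) := by
    rcases eq_or_ne S 0 with h0 | h0
    · rw [h0, degree_zero]; exact WithBot.bot_lt_coe _
    · have hX2 : (X^2 : ℚ[X]) ≠ 0 := pow_ne_zero 2 X_ne_zero
      have : (X^2 * S).degree ≤ ((k+1 : ℕ) : WithBot ℕ) := by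
        rw [hXXS]
        refine le_trans (degree_add_le _ _) (max_le ?_ (le_of_lt hR''deg))
        exact le_trans (degree_C_mul_X_pow_le _ _) le_rfl
      rw [degree_mul, degree_X_pow, degree_eq_natDegree h0] at this
      have h2 : ((2 + S.natDegree : ℕ) : WithBot ℕ) ≤ ((k+1:ℕ) : WithBot ℕ) := by
        convert this using 2
        norm_cast
      have : 2 + S.natDegree ≤ k + 1 := by exact_mod_cast h2
      rw [degree_eq_natDegree h0]
      exact_mod_cast by omega
  -- value of the coefficient
  have hcoeff : S.coeff (k-1) = cc := by
    have h3 : S.coeff (k-1) = (X^2 * S).coeff (k+1) := by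
      have := coeff_X_pow_mul S 2 (k-1)
      rw [show k - 1 + 2 = k + 1 by omega] at this
      exact this.symm
    rw [h3, hXXS, coeff_add, coeff_C_mul, coeff_X_pow, if_pos rfl, mul_one,
      coeff_eq_zero_of_degree_lt (by exact_mod_cast hR''deg), add_zero]
  -- compute cc explicitly
  have hsq : ∑ j ∈ range k, (x j + 1)^2 = (∑ j ∈ range k, (x j)^2) + 2*e1 + k := by
    have : ∀ j ∈ range k, (x j + 1)^2 = (x j)^2 + 2 * x j + 1 := fun j _ => by ring
    rw [sum_congr rfl this, sum_add_distrib, sum_add_distrib, sum_const, card_range,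
      ← Finset.mul_sum, he1]
    simp only [nsmul_eq_mul, mul_one]
  have hccval : cc = k*(k-1)/2 - e1 := by
    rw [hcc, e2, e2, h1, hsq]
    push_cast
    ring
  -- evaluations
  have heval : ∀ a ∈ range k, S.eval (x a)
      = - (x a * ∏ j ∈ (range k).erase a, (x a - x j - 1)) := by
    intro a ha
    have hPz : P.eval (x a) = 0 := by
      rw [hPdef, eval_prod]
      exact prod_eq_zero ha (by simp)
    have hPcv : Pc.eval (x a) = - ∏ j ∈ (range k).erase a, (x a - x j - 1) := by
      rw [hPcdef, eval_prod]
      rw [← Finset.mul_prod_erase _ _ ha]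
      simp only [eval_sub, eval_X, eval_C]
      rw [show x a - (x a + 1) = -1 by ring]
      rw [neg_one_mul, neg_inj]
      exact prod_congr rfl fun j _ => by ring
    rw [hSdef]
    simp only [eval_sub, eval_mul, eval_X, eval_C, hPz, hPcv]
    ring
  -- put it together
  have hfin := coeff_eq_sum x hx hSdeg
  rw [hcoeff, hccval] at hfin
  have : ∑ a ∈ range k, S.eval (x a) * ∏ j ∈ (range k).erase a, (x a - x j)⁻¹
      = - ∑ a ∈ range k, x a * ∏ j ∈ (range k).erase a, ((x a - x j - 1) / (x a - x j)) := by
    rw [← sum_neg_distrib]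
    refine sum_congr rfl fun a ha => ?_
    rw [heval a ha, prod_div_distrib, div_eq_mul_inv, ← prod_inv_distrib]
    ring
  rw [this] at hfin
  linarith


/-- β-numbers: `bb μ k i = μ.rowLen i + (k - 1 - i)`. -/
def bb (μ : YoungDiagram) (k i : ℕ) : ℕ := μ.rowLen i + (k - 1 - i)

lemma bb_strict {μ : YoungDiagram} {k i j : ℕ} (hij : i < j) (hj : j < k) :
    bb μ k j < bb μ k i := by
  have h := μ.rowLen_anti i j (le_of_lt hij)
  unfold bb
  omega

lemma colLen_le {μ : YoungDiagram} {k : ℕ} (hk : μ.colLen 0 ≤ k) (j : ℕ) :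
    μ.colLen j ≤ k := le_trans (μ.colLen_anti 0 j (Nat.zero_le j)) hk

lemma row_hook_prod (μ : YoungDiagram) {k i : ℕ} (hk : μ.colLen 0 ≤ k) (hi : i < k) :
    (∏ j ∈ range (μ.rowLen i), hookLength μ (i, j))
      * (∏ m ∈ Ioo i k, (bb μ k i - bb μ k m)) = Nat.factorial (bb μ k i) := by
  classical
  set n := bb μ k i with hn
  set A : Finset ℕ := (range (μ.rowLen i)).image (fun j => k + j - μ.colLen j) with hA
  set B : Finset ℕ := (Ioo i k).image (bb μ k) with hB
  have hcolmem : ∀ j, j < μ.rowLen i → i + 1 ≤ μ.colLen j := by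
    intro j hj
    have : (i, j) ∈ μ := YoungDiagram.mem_iff_lt_rowLen.mpr hj
    exact YoungDiagram.mem_iff_lt_colLen.mp this
  have hinjA : Set.InjOn (fun j => k + j - μ.colLen j) (range (μ.rowLen i)) := by
    intro j1 h1 j2 h2 he
    simp only [mem_coe, mem_range] at h1 h2
    rcases lt_trichotomy j1 j2 with h | h | h
    · have hc := μ.colLen_anti j1 j2 (le_of_lt h)
      have := colLen_le hk j1
      have := hcolmem j1 h1
      simp only at he; omega
    · exact h
    · have hc := μ.colLen_anti j2 j1 (le_of_lt h)
      have := colLen_le hk j2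
      have := hcolmem j2 h2
      simp only at he; omega
  have hinjB : Set.InjOn (bb μ k) (Ioo i k) := by
    intro m1 h1 m2 h2 he
    simp only [mem_coe, mem_Ioo] at h1 h2
    rcases lt_trichotomy m1 m2 with h | h | h
    · exact absurd he (ne_of_gt (bb_strict h h2.2))
    · exact h
    · exact absurd he (ne_of_lt (bb_strict h h1.2))
  have hAsub : A ⊆ range n := by
    intro s hs
    rw [hA, mem_image] at hs
    obtain ⟨j, hj, rfl⟩ := hs
    rw [mem_range] at hj
    rw [mem_range, hn]
    have h1 := hcolmem j hj
    have h2 := colLen_le hk j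
    unfold bb
    omega
  have hBsub : B ⊆ range n := by
    intro s hs
    rw [hB, mem_image] at hs
    obtain ⟨m, hm, rfl⟩ := hs
    rw [mem_Ioo] at hm
    rw [mem_range, hn]
    exact bb_strict hm.1 hm.2
  have hdisj : Disjoint A B := by
    rw [disjoint_left]
    intro s hsA hsB
    rw [hA, mem_image] at hsA
    rw [hB, mem_image] at hsB
    obtain ⟨j, hj, he1⟩ := hsA
    obtain ⟨m, hm, he2⟩ := hsB
    simp only [mem_range] at hj
    simp only [mem_Ioo] at hm
    by_cases hcase : j < μ.rowLen m
    · -- (m, j) ∈ μ, so colLen j ≥ m+1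
      have h1 : m + 1 ≤ μ.colLen j :=
        YoungDiagram.mem_iff_lt_colLen.mp (YoungDiagram.mem_iff_lt_rowLen.mpr hcase)
      have h2 := colLen_le hk j
      unfold bb at he2
      omega
    · -- (m, j) ∉ μ, so colLen j ≤ m
      have h1 : μ.colLen j ≤ m := by
        by_contra hcon
        exact hcase (YoungDiagram.mem_iff_lt_rowLen.mp
          (YoungDiagram.mem_iff_lt_colLen.mpr (by omega)))
      have h3 := μ.rowLen_anti i m (le_of_lt hm.1)
      unfold bb at he2
      have : μ.rowLen m ≤ j := by omega
      omega
  have hcards : A.card + B.card = n := by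
    rw [Finset.card_image_of_injOn hinjA, Finset.card_image_of_injOn hinjB,
      card_range, Nat.card_Ioo]
    rw [hn]; unfold bb; omega
  have hunion : A ∪ B = range n := by
    apply Finset.eq_of_subset_of_card_le (union_subset hAsub hBsub)
    rw [card_union_of_disjoint hdisj, hcards, card_range]
  have hhook : ∀ j ∈ range (μ.rowLen i), hookLength μ (i, j) = n - (k + j - μ.colLen j) := by
    intro j hj
    simp only [mem_range] at hj
    have h1 := hcolmem j hj
    have h2 := colLen_le hk j
    unfold hookLength
    simp only
    rw [hn]; unfold bb
    have h3 : j + 1 ≤ μ.rowLen i := hj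
    omega
  calc (∏ j ∈ range (μ.rowLen i), hookLength μ (i, j)) * ∏ m ∈ Ioo i k, (bb μ k i - bb μ k m)
      = (∏ s ∈ A, (n - s)) * ∏ s ∈ B, (n - s) := by
        congr 1
        · rw [hA, Finset.prod_image hinjA]
          exact Finset.prod_congr rfl hhook
        · rw [hB, Finset.prod_image hinjB]
    _ = ∏ s ∈ A ∪ B, (n - s) := (Finset.prod_union hdisj).symm
    _ = ∏ s ∈ range n, (n - s) := by rw [hunion]
    _ = Nat.factorial n := by
        rw [← Finset.prod_range_reflect]
        rw [Finset.prod_congr rfl (fun j hj => by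
          simp only [mem_range] at hj
          show n - (n - 1 - j) = j + 1
          omega)]
        exact Finset.prod_range_add_one_eq_factorial n

lemma cells_eq_biUnion (μ : YoungDiagram) {k : ℕ} (hk : μ.colLen 0 ≤ k) :
    μ.cells = (range k).biUnion (fun i => {i} ×ˢ range (μ.rowLen i)) := by
  ext ⟨a, b⟩
  simp only [mem_biUnion, mem_product, mem_singleton, mem_range, YoungDiagram.mem_cells]
  constructor
  · intro h
    have h1 : a < μ.colLen b := YoungDiagram.mem_iff_lt_colLen.mp h
    exact ⟨a, lt_of_lt_of_le h1 (colLen_le hk b), rfl, YoungDiagram.mem_iff_lt_rowLen.mp h⟩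
  · rintro ⟨i, hik, rfl, hb⟩
    exact YoungDiagram.mem_iff_lt_rowLen.mpr hb

lemma rows_disjoint (μ : YoungDiagram) {k : ℕ} :
    ∀ i1 ∈ range k, ∀ i2 ∈ range k, i1 ≠ i2 →
      Disjoint ({i1} ×ˢ range (μ.rowLen i1)) ({i2} ×ˢ range (μ.rowLen i2)) := by
  intro i1 _ i2 _ hne
  rw [disjoint_left]
  rintro ⟨a, b⟩ h1 h2
  simp only [mem_product, mem_singleton] at h1 h2
  exact hne (h1.1.symm.trans h2.1)

lemma card_cells (μ : YoungDiagram) {k : ℕ} (hk : μ.colLen 0 ≤ k) :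
    μ.cells.card = ∑ i ∈ range k, μ.rowLen i := by
  rw [cells_eq_biUnion μ hk, Finset.card_biUnion (rows_disjoint μ)]
  refine Finset.sum_congr rfl fun i _ => ?_
  rw [Finset.card_product, card_singleton, card_range, one_mul]

lemma hook_prod_formula (μ : YoungDiagram) {k : ℕ} (hk : μ.colLen 0 ≤ k) :
    ydHookProd μ * (∏ i ∈ range k, ∏ m ∈ Ioo i k, (bb μ k i - bb μ k m))
      = ∏ i ∈ range k, Nat.factorial (bb μ k i) := by
  have h1 : ydHookProd μ = ∏ i ∈ range k, ∏ j ∈ range (μ.rowLen i), hookLength μ (i, j) := by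
    unfold ydHookProd
    rw [cells_eq_biUnion μ hk, Finset.prod_biUnion (rows_disjoint μ)]
    refine Finset.prod_congr rfl fun i _ => ?_
    rw [Finset.prod_product, Finset.prod_singleton]
  rw [h1, ← Finset.prod_mul_distrib]
  exact Finset.prod_congr rfl fun i hi => row_hook_prod μ hk (mem_range.mp hi)


def eraseCell (μ : YoungDiagram) (c : ℕ × ℕ) : YoungDiagram where
  cells := μ.cells.filter (fun x => ¬(c.1 ≤ x.1 ∧ c.2 ≤ x.2))
  isLowerSet := by
    intro a b hba ha
    simp only [coe_filter, Set.mem_setOf_eq, Finset.mem_coe] at ha ⊢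
    obtain ⟨h1, h2⟩ := ha
    refine ⟨μ.isLowerSet hba h1, fun hc => h2 ⟨le_trans hc.1 hba.1, le_trans hc.2 hba.2⟩⟩

lemma mem_eraseCell {μ : YoungDiagram} {c x : ℕ × ℕ} :
    x ∈ eraseCell μ c ↔ x ∈ μ ∧ ¬(c.1 ≤ x.1 ∧ c.2 ≤ x.2) := by
  rw [← YoungDiagram.mem_cells]
  simp [eraseCell, YoungDiagram.mem_cells]

lemma rowLen_eq_of {ν : YoungDiagram} {a n : ℕ} (h : ∀ j, (a, j) ∈ ν ↔ j < n) :
    ν.rowLen a = n := by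
  have h1 := h (ν.rowLen a)
  have h2 := h n
  rw [YoungDiagram.mem_iff_lt_rowLen] at h1 h2
  omega

/-- corner rows -/
def CR (μ : YoungDiagram) : Finset ℕ :=
  (range (μ.colLen 0)).filter (fun r => μ.rowLen (r+1) < μ.rowLen r)

lemma rowLen_pos_of_lt_colLen {μ : YoungDiagram} {r : ℕ} (h : r < μ.colLen 0) :
    0 < μ.rowLen r := by
  have : (r, 0) ∈ μ := YoungDiagram.mem_iff_lt_colLen.mpr h
  exact Nat.pos_of_ne_zero fun h0 => by
    rw [YoungDiagram.mem_iff_lt_rowLen, h0] at this; omega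

lemma mem_CR_iff {μ : YoungDiagram} {r : ℕ} :
    r ∈ CR μ ↔ r < μ.colLen 0 ∧ μ.rowLen (r+1) < μ.rowLen r := by
  simp [CR]

lemma corner_mem {μ : YoungDiagram} {r : ℕ} (hr : r ∈ CR μ) :
    (r, μ.rowLen r - 1) ∈ μ := by
  obtain ⟨h1, _⟩ := mem_CR_iff.mp hr
  have := rowLen_pos_of_lt_colLen h1
  rw [YoungDiagram.mem_iff_lt_rowLen]
  omega

lemma eraseCell_cells {μ : YoungDiagram} {r : ℕ} (hr : r ∈ CR μ) :
    (eraseCell μ (r, μ.rowLen r - 1)).cells = μ.cells.erase (r, μ.rowLen r - 1) := by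
  obtain ⟨h1, h2⟩ := mem_CR_iff.mp hr
  have hpos := rowLen_pos_of_lt_colLen h1
  ext ⟨a, b⟩
  rw [Finset.mem_erase, YoungDiagram.mem_cells, YoungDiagram.mem_cells, mem_eraseCell]
  simp only
  constructor
  · rintro ⟨hmem, hno⟩
    refine ⟨fun he => ?_, hmem⟩
    rw [Prod.mk.injEq] at he
    exact hno ⟨le_of_eq he.1.symm, le_of_eq he.2.symm⟩
  · rintro ⟨hne, hmem⟩
    refine ⟨hmem, fun hc => hne ?_⟩
    -- a ≥ r, b ≥ rowLen r - 1, (a,b) ∈ μ forces (a,b) = (r, rowLen r - 1)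
    have hb : b < μ.rowLen a := YoungDiagram.mem_iff_lt_rowLen.mp hmem
    have har : a = r := by
      by_contra hne2
      have : r + 1 ≤ a := by omega
      have := μ.rowLen_anti (r+1) a this
      omega
    subst har
    have : b = μ.rowLen a - 1 := by omega
    rw [this]

lemma rowLen_eraseCell {μ : YoungDiagram} {r : ℕ} (hr : r ∈ CR μ) (a : ℕ) :
    (eraseCell μ (r, μ.rowLen r - 1)).rowLen a
      = if a = r then μ.rowLen r - 1 else μ.rowLen a := by
  obtain ⟨h1, h2⟩ := mem_CR_iff.mp hr
  have hpos := rowLen_pos_of_lt_colLen h1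
  apply rowLen_eq_of
  intro j
  rw [mem_eraseCell]
  simp only
  rw [YoungDiagram.mem_iff_lt_rowLen]
  by_cases ha : a = r
  · subst ha
    rw [if_pos rfl]
    omega
  · rw [if_neg ha]
    constructor
    · rintro ⟨hj, _⟩; exact hj
    · intro hj
      refine ⟨hj, fun hc => ?_⟩
      have har : r + 1 ≤ a := by omega
      have := μ.rowLen_anti (r+1) a har
      omega

lemma colLen_mono {ν μ : YoungDiagram} (h : ν ≤ μ) (j : ℕ) : ν.colLen j ≤ μ.colLen j := by
  rcases Nat.eq_zero_or_pos (ν.colLen j) with h0 | h0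
  · omega
  · have : (ν.colLen j - 1, j) ∈ ν := YoungDiagram.mem_iff_lt_colLen.mpr (by omega)
    have : (ν.colLen j - 1, j) ∈ μ := by
      rw [← YoungDiagram.mem_cells] at this ⊢
      exact YoungDiagram.cells_subset_iff.mpr h this
    have := YoungDiagram.mem_iff_lt_colLen.mp this
    omega

lemma eraseCell_le {μ : YoungDiagram} {c : ℕ × ℕ} : eraseCell μ c ≤ μ :=
  YoungDiagram.cells_subset_iff.mp (Finset.filter_subset _ _)

lemma card_eraseCell {μ : YoungDiagram} {r : ℕ} (hr : r ∈ CR μ) :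
    (eraseCell μ (r, μ.rowLen r - 1)).cells.card = μ.cells.card - 1 := by
  rw [eraseCell_cells hr, Finset.card_erase_of_mem]
  rw [YoungDiagram.mem_cells]
  exact corner_mem hr

def SYT (μ : YoungDiagram) :=
  {f : μ.cells → Fin μ.cells.card //
      Function.Bijective f ∧
        (∀ c d : μ.cells, (c : ℕ × ℕ).1 = (d : ℕ × ℕ).1 →
          (c : ℕ × ℕ).2 < (d : ℕ × ℕ).2 → f c < f d) ∧
        (∀ c d : μ.cells, (c : ℕ × ℕ).2 = (d : ℕ × ℕ).2 →
          (c : ℕ × ℕ).1 < (d : ℕ × ℕ).1 → f c < f d)}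

instance (μ : YoungDiagram) : Finite (SYT μ) := by unfold SYT; infer_instance

variable {μ : YoungDiagram}

noncomputable def topcell (hpos : 0 < μ.cells.card) (F : SYT μ) : ↥μ.cells :=
  (Equiv.ofBijective F.1 F.2.1).symm ⟨μ.cells.card - 1, by omega⟩

lemma topcell_spec (hpos : 0 < μ.cells.card) (F : SYT μ) :
    F.1 (topcell hpos F) = ⟨μ.cells.card - 1, by omega⟩ :=
  (Equiv.ofBijective F.1 F.2.1).apply_symm_apply _

lemma val_le (F : SYT μ) (d : ↥μ.cells) : (F.1 d : ℕ) ≤ μ.cells.card - 1 := by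
  have := (F.1 d).isLt; omega

noncomputable def cornerRow (hpos : 0 < μ.cells.card) (F : SYT μ) : ℕ :=
  (topcell hpos F : ℕ × ℕ).1

lemma topcell_eq (hpos : 0 < μ.cells.card) (F : SYT μ) :
    cornerRow hpos F ∈ CR μ ∧
    (topcell hpos F : ℕ × ℕ) = (cornerRow hpos F, μ.rowLen (cornerRow hpos F) - 1) := by
  obtain ⟨f, hbij, hrow, hcol⟩ := F
  set F : SYT μ := ⟨f, hbij, hrow, hcol⟩ with hF
  set c := topcell hpos F with hc
  have hcmem : (c : ℕ × ℕ) ∈ μ := by rw [← YoungDiagram.mem_cells]; exact c.2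
  set r := cornerRow hpos F with hrdef
  have hc1 : (c : ℕ × ℕ).1 = r := rfl
  have hspec : f c = ⟨μ.cells.card - 1, by omega⟩ := by rw [hc]; exact topcell_spec hpos F
  have hright : ((c : ℕ × ℕ).1, (c : ℕ × ℕ).2 + 1) ∉ μ := by
    intro hmem
    have hlt := hrow c ⟨((c : ℕ × ℕ).1, (c : ℕ × ℕ).2 + 1), by rwa [YoungDiagram.mem_cells]⟩
      rfl (by simp)
    have := val_le F ⟨((c : ℕ × ℕ).1, (c : ℕ × ℕ).2 + 1), by rwa [YoungDiagram.mem_cells]⟩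
    rw [hspec] at hlt
    rw [Fin.lt_def] at hlt
    simp at hlt
    omega
  have hdown : ((c : ℕ × ℕ).1 + 1, (c : ℕ × ℕ).2) ∉ μ := by
    intro hmem
    have hlt := hcol c ⟨((c : ℕ × ℕ).1 + 1, (c : ℕ × ℕ).2), by rwa [YoungDiagram.mem_cells]⟩
      rfl (by simp)
    have := val_le F ⟨((c : ℕ × ℕ).1 + 1, (c : ℕ × ℕ).2), by rwa [YoungDiagram.mem_cells]⟩
    rw [hspec] at hlt
    rw [Fin.lt_def] at hlt
    simp at hlt
    omega
  have hlt1 : (c : ℕ × ℕ).2 < μ.rowLen r := by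
    rw [← hc1]
    exact YoungDiagram.mem_iff_lt_rowLen.mp (by rwa [← Prod.mk.eta (p := (c : ℕ × ℕ))] at hcmem)
  have hge1 : μ.rowLen r ≤ (c : ℕ × ℕ).2 + 1 := by
    by_contra hcon
    exact hright (by rw [YoungDiagram.mem_iff_lt_rowLen, hc1]; omega)
  have hsnd : (c : ℕ × ℕ).2 = μ.rowLen r - 1 := by omega
  have hnext : μ.rowLen (r + 1) < μ.rowLen r := by
    have : μ.rowLen (r+1) ≤ (c : ℕ × ℕ).2 := by
      by_contra hcon
      exact hdown (by rw [YoungDiagram.mem_iff_lt_rowLen, hc1]; omega)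
    omega
  have hcol0 : r < μ.colLen 0 := by
    have h1 : r < μ.colLen (c : ℕ × ℕ).2 := by
      rw [← hc1]
      exact YoungDiagram.mem_iff_lt_colLen.mp (by rwa [← Prod.mk.eta (p := (c : ℕ × ℕ))] at hcmem)
    exact lt_of_lt_of_le h1 (μ.colLen_anti 0 _ (Nat.zero_le _))
  exact ⟨mem_CR_iff.mpr ⟨hcol0, hnext⟩, Prod.ext hc1 hsnd⟩

lemma mem_of_mem_erase' {μ : YoungDiagram} {r : ℕ} (hr : r ∈ CR μ) {x : ℕ × ℕ}
    (hx : x ∈ (eraseCell μ (r, μ.rowLen r - 1)).cells) : x ∈ μ.cells := by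
  rw [eraseCell_cells hr] at hx
  exact Finset.mem_of_mem_erase hx

lemma ne_corner_of_mem_erase {μ : YoungDiagram} {r : ℕ} (hr : r ∈ CR μ) {x : ℕ × ℕ}
    (hx : x ∈ (eraseCell μ (r, μ.rowLen r - 1)).cells) : x ≠ (r, μ.rowLen r - 1) := by
  rw [eraseCell_cells hr] at hx
  exact Finset.ne_of_mem_erase hx

noncomputable def restrictFun (hpos : 0 < μ.cells.card) (F : SYT μ)
    (x : ↥(eraseCell μ (cornerRow hpos F, μ.rowLen (cornerRow hpos F) - 1)).cells) :
    Fin (eraseCell μ (cornerRow hpos F, μ.rowLen (cornerRow hpos F) - 1)).cells.card := by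
  have hr := (topcell_eq hpos F).1
  refine ⟨(F.1 ⟨x.1, mem_of_mem_erase' hr x.2⟩ : ℕ), ?_⟩
  rw [card_eraseCell hr]
  have hle := val_le F ⟨x.1, mem_of_mem_erase' hr x.2⟩
  rcases Nat.lt_or_ge (F.1 ⟨x.1, mem_of_mem_erase' hr x.2⟩ : ℕ) (μ.cells.card - 1) with h | h
  · exact h
  · exfalso
    have heq : F.1 ⟨x.1, mem_of_mem_erase' hr x.2⟩ = F.1 (topcell hpos F) := by
      rw [topcell_spec hpos F]
      apply Fin.ext
      show (F.1 ⟨x.1, mem_of_mem_erase' hr x.2⟩ : ℕ) = μ.cells.card - 1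
      omega
    have := F.2.1.1 heq
    have hxc : x.1 = (topcell hpos F : ℕ × ℕ) := by rw [← this]
    rw [(topcell_eq hpos F).2] at hxc
    exact ne_corner_of_mem_erase hr x.2 hxc

lemma restrictFun_val (hpos : 0 < μ.cells.card) (F : SYT μ) (x) :
    (restrictFun hpos F x : ℕ)
      = (F.1 ⟨x.1, mem_of_mem_erase' (topcell_eq hpos F).1 x.2⟩ : ℕ) := rfl

noncomputable def restrictSYT (hpos : 0 < μ.cells.card) (F : SYT μ) :
    SYT (eraseCell μ (cornerRow hpos F, μ.rowLen (cornerRow hpos F) - 1)) := by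
  refine ⟨restrictFun hpos F, ?_, ?_, ?_⟩
  · -- bijective
    rw [Fintype.bijective_iff_injective_and_card]
    constructor
    · intro x y hxy
      have h1 : (restrictFun hpos F x : ℕ) = (restrictFun hpos F y : ℕ) := by rw [hxy]
      rw [restrictFun_val, restrictFun_val] at h1
      have := F.2.1.1 (Fin.ext h1)
      rw [Subtype.mk.injEq] at this
      exact Subtype.ext this
    · rw [Fintype.card_coe, Fintype.card_fin]
  · intro c d h1 h2
    rw [Fin.lt_def, restrictFun_val, restrictFun_val]
    exact F.2.2.1 _ _ h1 h2
  · intro c d h1 h2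
    rw [Fin.lt_def, restrictFun_val, restrictFun_val]
    exact F.2.2.2 _ _ h1 h2

noncomputable def Phi (hpos : 0 < μ.cells.card) (F : SYT μ) :
    Σ r : ↥(CR μ), SYT (eraseCell μ (r.1, μ.rowLen r.1 - 1)) :=
  ⟨⟨cornerRow hpos F, (topcell_eq hpos F).1⟩, restrictSYT hpos F⟩

lemma sigma_eq {μ : YoungDiagram} (r1 r2 : ℕ) (h1 : r1 ∈ CR μ) (h2 : r2 ∈ CR μ)
    (g1 : SYT (eraseCell μ (r1, μ.rowLen r1 - 1))) (g2 : SYT (eraseCell μ (r2, μ.rowLen r2 - 1)))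
    (hr : r1 = r2)
    (hg : ∀ x (hx1 : x ∈ (eraseCell μ (r1, μ.rowLen r1 - 1)).cells)
      (hx2 : x ∈ (eraseCell μ (r2, μ.rowLen r2 - 1)).cells),
      (g1.1 ⟨x, hx1⟩ : ℕ) = (g2.1 ⟨x, hx2⟩ : ℕ)) :
    (⟨⟨r1, h1⟩, g1⟩ : Σ r : ↥(CR μ), SYT (eraseCell μ (r.1, μ.rowLen r.1 - 1)))
      = ⟨⟨r2, h2⟩, g2⟩ := by
  subst hr
  congr 1
  apply Subtype.ext
  funext x
  exact Fin.ext (hg x.1 x.2 x.2)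

def rawOf {ν : YoungDiagram} (G : SYT ν) : ℕ × ℕ → ℕ := fun x =>
  if hx : x ∈ ν.cells then (G.1 ⟨x, hx⟩ : ℕ) else 0

lemma rawOf_pos {ν : YoungDiagram} (G : SYT ν) {x : ℕ × ℕ} (hx : x ∈ ν.cells) :
    rawOf G x = (G.1 ⟨x, hx⟩ : ℕ) := dif_pos hx

lemma Phi_injective (hpos : 0 < μ.cells.card) : Function.Injective (Phi hpos) := by
  intro F1 F2 h
  have hr : cornerRow hpos F1 = cornerRow hpos F2 := congrArg (fun t => t.1.1) h
  have hW : rawOf (Phi hpos F1).2 = rawOf (Phi hpos F2).2 := congrArg (fun t => rawOf t.2) h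
  apply Subtype.ext
  funext x
  apply Fin.ext
  by_cases hx : x.1 ∈ (eraseCell μ (cornerRow hpos F1, μ.rowLen (cornerRow hpos F1) - 1)).cells
  · have hx2 : x.1 ∈ (eraseCell μ (cornerRow hpos F2, μ.rowLen (cornerRow hpos F2) - 1)).cells := by
      rw [← hr]; exact hx
    have e1 : rawOf (Phi hpos F1).2 x.1 = (F1.1 x : ℕ) := rawOf_pos (Phi hpos F1).2 hx
    have e2 : rawOf (Phi hpos F2).2 x.1 = (F2.1 x : ℕ) := rawOf_pos (Phi hpos F2).2 hx2
    rw [← e1, ← e2, hW]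
  · -- x is the top corner of both
    have hc1 : x.1 = (cornerRow hpos F1, μ.rowLen (cornerRow hpos F1) - 1) := by
      rw [eraseCell_cells (topcell_eq hpos F1).1, Finset.mem_erase] at hx
      push_neg at hx
      by_contra hne
      exact (hx hne) x.2
    have hx1top : x = topcell hpos F1 := by
      apply Subtype.ext
      rw [hc1, (topcell_eq hpos F1).2]
    have hx2top : x = topcell hpos F2 := by
      apply Subtype.ext
      rw [hc1, hr, (topcell_eq hpos F2).2]
    have v1 : F1.1 x = ⟨μ.cells.card - 1, by omega⟩ := by
      rw [hx1top]; exact topcell_spec hpos F1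
    have v2 : F2.1 x = ⟨μ.cells.card - 1, by omega⟩ := by
      rw [hx2top]; exact topcell_spec hpos F2
    rw [v1, v2]

lemma Phi_surjective (hpos : 0 < μ.cells.card) : Function.Surjective (Phi hpos) := by
  classical
  rintro ⟨⟨r, hr⟩, g, hgbij, hgrow, hgcol⟩
  have hCR := mem_CR_iff.mp hr
  have hposr : 0 < μ.rowLen r := rowLen_pos_of_lt_colLen hCR.1
  have hcorner_mem : (r, μ.rowLen r - 1) ∈ μ.cells := by
    rw [YoungDiagram.mem_cells]; exact corner_mem hr
  have hcard : (eraseCell μ (r, μ.rowLen r - 1)).cells.card = μ.cells.card - 1 :=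
    card_eraseCell hr
  have hcornot : (r, μ.rowLen r - 1) ∉ (eraseCell μ (r, μ.rowLen r - 1)).cells := by
    rw [eraseCell_cells hr]; exact Finset.notMem_erase _ _
  set f : ↥μ.cells → Fin μ.cells.card := fun x =>
    if hx : x.1 ∈ (eraseCell μ (r, μ.rowLen r - 1)).cells
    then ⟨(g ⟨x.1, hx⟩ : ℕ), by
      have h : (g ⟨x.1, hx⟩ : ℕ) < μ.cells.card - 1 :=
        lt_of_lt_of_le (g ⟨x.1, hx⟩).isLt (le_of_eq hcard)
      omega⟩
    else ⟨μ.cells.card - 1, by omega⟩ with hf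
  have hforce : ∀ x : ↥μ.cells, x.1 ∉ (eraseCell μ (r, μ.rowLen r - 1)).cells →
      x.1 = (r, μ.rowLen r - 1) := by
    intro x hx
    rw [eraseCell_cells hr, Finset.mem_erase] at hx
    push_neg at hx
    by_contra hne
    exact (hx hne) x.2
  have hval_lt : ∀ (x : ↥μ.cells) (hx : x.1 ∈ (eraseCell μ (r, μ.rowLen r - 1)).cells),
      (f x : ℕ) < μ.cells.card - 1 := by
    intro x hx
    simp only [hf, dif_pos hx]
    exact lt_of_lt_of_le (g ⟨x.1, hx⟩).isLt (le_of_eq hcard)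
  have hval_eq : ∀ (x : ↥μ.cells) (hx : x.1 ∈ (eraseCell μ (r, μ.rowLen r - 1)).cells),
      (f x : ℕ) = (g ⟨x.1, hx⟩ : ℕ) := by
    intro x hx
    simp only [hf, dif_pos hx]
  have hfc : ∀ (x : ↥μ.cells), x.1 ∉ (eraseCell μ (r, μ.rowLen r - 1)).cells →
      (f x : ℕ) = μ.cells.card - 1 := by
    intro x hx
    simp only [hf, dif_neg hx]
  have hinj : Function.Injective f := by
    intro x y hxy
    have hval : (f x : ℕ) = (f y : ℕ) := by rw [hxy]
    by_cases hx : x.1 ∈ (eraseCell μ (r, μ.rowLen r - 1)).cells <;>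
      by_cases hy : y.1 ∈ (eraseCell μ (r, μ.rowLen r - 1)).cells
    · rw [hval_eq x hx, hval_eq y hy] at hval
      have := hgbij.1 (Fin.ext hval)
      rw [Subtype.mk.injEq] at this
      exact Subtype.ext this
    · rw [hval_eq x hx, hfc y hy] at hval
      have h : (g ⟨x.1, hx⟩ : ℕ) < μ.cells.card - 1 :=
        lt_of_lt_of_le (g ⟨x.1, hx⟩).isLt (le_of_eq hcard)
      omega
    · rw [hfc x hx, hval_eq y hy] at hval
      have h : (g ⟨y.1, hy⟩ : ℕ) < μ.cells.card - 1 :=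
        lt_of_lt_of_le (g ⟨y.1, hy⟩).isLt (le_of_eq hcard)
      omega
    · exact Subtype.ext ((hforce x hx).trans (hforce y hy).symm)
  have hbijf : Function.Bijective f := by
    rw [Fintype.bijective_iff_injective_and_card]
    exact ⟨hinj, by rw [Fintype.card_coe, Fintype.card_fin]⟩
  have hfrow : ∀ c d : ↥μ.cells, (c : ℕ × ℕ).1 = (d : ℕ × ℕ).1 →
      (c : ℕ × ℕ).2 < (d : ℕ × ℕ).2 → f c < f d := by
    intro c d h1 h2
    have hcnot : (c : ℕ × ℕ) ≠ (r, μ.rowLen r - 1) := by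
      intro he
      have hdmem : (d : ℕ × ℕ) ∈ μ := by rw [← YoungDiagram.mem_cells]; exact d.2
      have hd2 : (d : ℕ × ℕ).2 < μ.rowLen (d : ℕ × ℕ).1 :=
        YoungDiagram.mem_iff_lt_rowLen.mp (by rwa [← Prod.mk.eta (p := (d : ℕ × ℕ))] at hdmem)
      have he1 : (c : ℕ × ℕ).1 = r := by rw [he]
      have he2 : (c : ℕ × ℕ).2 = μ.rowLen r - 1 := by rw [he]
      rw [← h1, he1] at hd2
      omega
    have hcmem : (c : ℕ × ℕ) ∈ (eraseCell μ (r, μ.rowLen r - 1)).cells := by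
      by_contra hcon
      exact hcnot (hforce c hcon)
    by_cases hy : (d : ℕ × ℕ) ∈ (eraseCell μ (r, μ.rowLen r - 1)).cells
    · rw [Fin.lt_def, hval_eq c hcmem, hval_eq d hy]
      exact hgrow ⟨(c : ℕ × ℕ), hcmem⟩ ⟨(d : ℕ × ℕ), hy⟩ h1 h2
    · rw [Fin.lt_def, hval_eq c hcmem, hfc d hy]
      exact lt_of_lt_of_le (g ⟨(c : ℕ × ℕ), hcmem⟩).isLt (le_of_eq hcard)
  have hfcol : ∀ c d : ↥μ.cells, (c : ℕ × ℕ).2 = (d : ℕ × ℕ).2 →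
      (c : ℕ × ℕ).1 < (d : ℕ × ℕ).1 → f c < f d := by
    intro c d h1 h2
    have hcnot : (c : ℕ × ℕ) ≠ (r, μ.rowLen r - 1) := by
      intro he
      have hdmem : (d : ℕ × ℕ) ∈ μ := by rw [← YoungDiagram.mem_cells]; exact d.2
      have hd2 : (d : ℕ × ℕ).2 < μ.rowLen (d : ℕ × ℕ).1 :=
        YoungDiagram.mem_iff_lt_rowLen.mp (by rwa [← Prod.mk.eta (p := (d : ℕ × ℕ))] at hdmem)
      have he1 : (c : ℕ × ℕ).1 = r := by rw [he]
      have he2 : (c : ℕ × ℕ).2 = μ.rowLen r - 1 := by rw [he]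
      have hanti := μ.rowLen_anti (r+1) (d : ℕ × ℕ).1 (by omega)
      rw [← h1, he2] at hd2
      omega
    have hcmem : (c : ℕ × ℕ) ∈ (eraseCell μ (r, μ.rowLen r - 1)).cells := by
      by_contra hcon
      exact hcnot (hforce c hcon)
    by_cases hy : (d : ℕ × ℕ) ∈ (eraseCell μ (r, μ.rowLen r - 1)).cells
    · rw [Fin.lt_def, hval_eq c hcmem, hval_eq d hy]
      exact hgcol ⟨(c : ℕ × ℕ), hcmem⟩ ⟨(d : ℕ × ℕ), hy⟩ h1 h2
    · rw [Fin.lt_def, hval_eq c hcmem, hfc d hy]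
      exact lt_of_lt_of_le (g ⟨(c : ℕ × ℕ), hcmem⟩).isLt (le_of_eq hcard)
  set F : SYT μ := ⟨f, hbijf, hfrow, hfcol⟩ with hF
  have hfc2 : F.1 ⟨(r, μ.rowLen r - 1), hcorner_mem⟩ = ⟨μ.cells.card - 1, by omega⟩ := by
    apply Fin.ext
    exact hfc ⟨(r, μ.rowLen r - 1), hcorner_mem⟩ hcornot
  have htop : topcell hpos F = ⟨(r, μ.rowLen r - 1), hcorner_mem⟩ := by
    rw [topcell, Equiv.symm_apply_eq]
    exact hfc2.symm
  have hcrF : cornerRow hpos F = r := by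
    rw [cornerRow, htop]
  refine ⟨F, ?_⟩
  rw [Phi]
  apply sigma_eq _ _ _ _ _ _ hcrF
  intro x hx1 hx2
  have hmm : x ∈ μ.cells := mem_of_mem_erase' hr hx2
  have hre : ((restrictSYT hpos F).1 ⟨x, hx1⟩ : ℕ) = (f ⟨x, hmm⟩ : ℕ) := rfl
  rw [hre, hval_eq ⟨x, hmm⟩ hx2]

lemma SYT_recurrence (μ : YoungDiagram) (hpos : 0 < μ.cells.card) :
    Nat.card (SYT μ) = ∑ r ∈ CR μ, Nat.card (SYT (eraseCell μ (r, μ.rowLen r - 1))) := by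
  classical
  letI : ∀ ν : YoungDiagram, Fintype (SYT ν) := fun ν => Fintype.ofFinite _
  have hbij : Function.Bijective (Phi hpos) := ⟨Phi_injective hpos, Phi_surjective hpos⟩
  rw [Nat.card_eq_of_bijective _ hbij, Nat.card_eq_fintype_card, Fintype.card_sigma]
  rw [← Finset.sum_coe_sort (CR μ)
    (fun r => Nat.card (SYT (eraseCell μ (r, μ.rowLen r - 1))))]
  exact Finset.sum_congr rfl fun i _ => Nat.card_eq_fintype_card.symm

-- GLUE
lemma bb_erase {μ : YoungDiagram} {r : ℕ} (hr : r ∈ CR μ) (k a : ℕ) :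
    bb (eraseCell μ (r, μ.rowLen r - 1)) k a
      = if a = r then bb μ k a - 1 else bb μ k a := by
  have hpos := rowLen_pos_of_lt_colLen (mem_CR_iff.mp hr).1
  rw [bb, bb, rowLen_eraseCell hr a]
  by_cases h : a = r
  · subst h; rw [if_pos rfl, if_pos rfl]; omega
  · rw [if_neg h, if_neg h]

lemma prod_erase_split (k r : ℕ) (hr : r < k) (f : ℕ → ℚ) :
    ∏ j ∈ (range k).erase r, f j = (∏ j ∈ range r, f j) * ∏ j ∈ Ioo r k, f j := by
  have hset : (range k).erase r = range r ∪ Ioo r k := by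
    ext x
    simp only [mem_erase, mem_union, mem_range, mem_Ioo]
    omega
  have hdisj : Disjoint (range r) (Ioo r k) := by
    rw [disjoint_left]
    intro x h1 h2
    rw [mem_range] at h1
    rw [mem_Ioo] at h2
    omega
  rw [hset, prod_union hdisj]

lemma double_split (k r : ℕ) (hr : r < k) (G : ℕ → ℚ) :
    ∏ a ∈ range k, ∏ b ∈ Ioo a k, (G a - G b)
      = ((∏ b ∈ Ioo r k, (G r - G b)) * ∏ a ∈ range r, (G a - G r))
        * ∏ a ∈ (range k).erase r, ∏ b ∈ (Ioo a k).erase r, (G a - G b) := by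
  rw [← Finset.mul_prod_erase (range k) _ (mem_range.mpr hr)]
  have hinner : ∀ a ∈ (range k).erase r,
      ∏ b ∈ Ioo a k, (G a - G b)
        = (if a < r then (G a - G r) else 1) * ∏ b ∈ (Ioo a k).erase r, (G a - G b) := by
    intro a ha
    rw [mem_erase, mem_range] at ha
    by_cases h : a < r
    · rw [if_pos h]
      exact (Finset.mul_prod_erase (Ioo a k) _ (mem_Ioo.mpr ⟨h, hr⟩)).symm
    · rw [if_neg h, one_mul, Finset.erase_eq_of_notMem]
      rw [mem_Ioo]
      omega
  rw [prod_congr rfl hinner, prod_mul_distrib]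
  have hfil : ∏ a ∈ (range k).erase r, (if a < r then (G a - G r) else 1)
      = ∏ a ∈ range r, (G a - G r) := by
    rw [← Finset.prod_filter]
    congr 1
    ext x
    simp only [mem_filter, mem_erase, mem_range]
    omega
  rw [hfil]
  ring

lemma SYT_card_empty (μ : YoungDiagram) (h : μ.cells.card = 0) : Nat.card (SYT μ) = 1 := by
  have hempty : μ.cells = ∅ := Finset.card_eq_zero.mp h
  have helim : ∀ x : ↥μ.cells, False := by
    rintro ⟨x, hx⟩
    rw [hempty] at hx
    exact absurd hx (Finset.notMem_empty x)
  have F0 : SYT μ := ⟨fun x => (helim x).elim,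
    ⟨fun a _ _ => (helim a).elim, fun y => by
      exfalso
      have := y.isLt
      omega⟩,
    fun c _ _ _ => (helim c).elim, fun c _ _ _ => (helim c).elim⟩
  rw [Nat.card_eq_one_iff_unique]
  refine ⟨⟨fun F1 F2 => ?_⟩, ⟨F0⟩⟩
  apply Subtype.ext
  funext x
  exact (helim x).elim

lemma main_aux : ∀ N : ℕ, ∀ μ : YoungDiagram, μ.cells.card = N →
    Nat.card (SYT μ) * ydHookProd μ = Nat.factorial N := by
  intro N
  induction N using Nat.strong_induction_on with
  | _ N ih =>
    intro μ hN
    rcases Nat.eq_zero_or_pos N with rfl | hpos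
    · rw [SYT_card_empty μ hN]
      have hempty : μ.cells = ∅ := Finset.card_eq_zero.mp hN
      rw [ydHookProd, hempty]
      simp [Nat.factorial]
    · have hposc : 0 < μ.cells.card := by omega
      set k := μ.colLen 0 with hk
      have hkle : μ.colLen 0 ≤ k := le_rfl
      have hNsum : N = ∑ i ∈ range k, μ.rowLen i := by rw [← hN, card_cells μ hkle]
      have hk0 : 0 < k := by
        by_contra hc
        have hzz : k = 0 := by omega
        rw [hzz] at hNsum
        simp at hNsum
        omega
      set B : ℕ → ℚ := fun a => (bb μ k a : ℚ) with hB
      have hBanti : ∀ a b : ℕ, a < b → b < k → B b < B a := fun a b h1 h2 => by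
        have h3 := bb_strict (μ := μ) (k := k) h1 h2
        show ((bb μ k b : ℕ) : ℚ) < ((bb μ k a : ℕ) : ℚ)
        exact_mod_cast h3
      have hBinj : Set.InjOn B (range k) := by
        intro a ha b hb hab
        rw [Finset.mem_coe, mem_range] at ha hb
        rcases lt_trichotomy a b with h | h | h
        · exact absurd hab (ne_of_gt (hBanti a b h hb))
        · exact h
        · exact absurd hab (ne_of_lt (hBanti b a h ha))
      have hcastD : ∀ ν : YoungDiagram,
          ((∏ a ∈ range k, ∏ b ∈ Ioo a k, (bb ν k a - bb ν k b) : ℕ) : ℚ)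
            = ∏ a ∈ range k, ∏ b ∈ Ioo a k, ((bb ν k a : ℚ) - (bb ν k b : ℚ)) := by
        intro ν
        rw [Nat.cast_prod]
        refine prod_congr rfl fun a _ => ?_
        rw [Nat.cast_prod]
        refine prod_congr rfl fun b hb => ?_
        rw [mem_Ioo] at hb
        exact Nat.cast_sub (le_of_lt (bb_strict hb.1 hb.2))
      -- hook formula for μ, cast to ℚ
      have h0 := congrArg (Nat.cast (R := ℚ)) (hook_prod_formula μ hkle)
      rw [Nat.cast_mul, hcastD μ, Nat.cast_prod] at h0
      -- h0 : ↑H * ∏∏(B a - B b) = ∏ ↑(bb μ k a)!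
      have hclaimA : ∀ r ∈ CR μ,
          (Nat.card (SYT (eraseCell μ (r, μ.rowLen r - 1))) : ℚ) * (ydHookProd μ : ℚ)
            = (Nat.factorial (N-1) : ℚ)
              * (B r * ∏ j ∈ (range k).erase r, ((B r - B j - 1)/(B r - B j))) := by
        intro r hr
        obtain ⟨hrk', hrcorner⟩ := mem_CR_iff.mp hr
        have hrk : r < k := hrk'
        have hrow_pos : 0 < μ.rowLen r := rowLen_pos_of_lt_colLen hrk'
        set ν := eraseCell μ (r, μ.rowLen r - 1) with hν
        have hνk : ν.colLen 0 ≤ k := le_trans (colLen_mono eraseCell_le 0) hkle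
        have hcardν : ν.cells.card = N - 1 := by rw [hν, card_eraseCell hr, hN]
        have ihν := ih (N-1) (by omega) ν hcardν
        have ihq : (Nat.card (SYT ν) : ℚ) * ((ydHookProd ν : ℕ) : ℚ)
            = (Nat.factorial (N-1) : ℚ) := by exact_mod_cast congrArg (Nat.cast (R := ℚ)) ihν
        have h1 := congrArg (Nat.cast (R := ℚ)) (hook_prod_formula ν hνk)
        rw [Nat.cast_mul, hcastD ν, Nat.cast_prod] at h1
        -- relate bb ν to B
        have hBν : ∀ a, ((bb ν k a : ℕ) : ℚ) = if a = r then B a - 1 else B a := by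
          intro a
          rw [hν, bb_erase hr k a]
          by_cases h : a = r
          · subst h
            rw [if_pos rfl, if_pos rfl]
            have hpos2 : 1 ≤ bb μ k a := by rw [bb]; omega
            show ((bb μ k a - 1 : ℕ) : ℚ) = ((bb μ k a : ℕ) : ℚ) - 1
            rw [Nat.cast_sub hpos2]
            norm_num
          · rw [if_neg h, if_neg h]
        -- products
        set P1 : ℚ := ∏ b ∈ Ioo r k, (B r - B b) with hP1def
        set P2 : ℚ := ∏ a ∈ range r, (B a - B r) with hP2def
        set P1' : ℚ := ∏ b ∈ Ioo r k, (B r - B b - 1) with hP1'def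
        set P2' : ℚ := ∏ a ∈ range r, (B a - B r + 1) with hP2'def
        set Rest : ℚ := ∏ a ∈ (range k).erase r, ∏ b ∈ (Ioo a k).erase r, (B a - B b)
          with hRestdef
        -- D for μ
        have hDμ : ∏ a ∈ range k, ∏ b ∈ Ioo a k, (B a - B b) = (P1 * P2) * Rest :=
          double_split k r hrk B
        -- D for ν
        have hDν : ∏ a ∈ range k, ∏ b ∈ Ioo a k, ((bb ν k a : ℚ) - (bb ν k b : ℚ))
            = (P1' * P2') * Rest := by
          rw [double_split k r hrk (fun a => ((bb ν k a : ℕ) : ℚ))]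
          congr 1
          · congr 1
            · rw [hP1'def]
              refine prod_congr rfl fun b hb => ?_
              rw [mem_Ioo] at hb
              rw [hBν r, hBν b, if_pos rfl, if_neg (by omega)]
              ring
            · rw [hP2'def]
              refine prod_congr rfl fun a ha => ?_
              rw [mem_range] at ha
              rw [hBν r, hBν a, if_pos rfl, if_neg (by omega)]
              ring
          · rw [hRestdef]
            refine prod_congr rfl fun a ha => ?_
            rw [mem_erase] at ha
            refine prod_congr rfl fun b hb => ?_
            rw [mem_erase] at hb
            rw [hBν a, hBν b, if_neg ha.1, if_neg hb.1]
        -- F relation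
        have hFrel : (∏ a ∈ range k, Nat.factorial (bb μ k a))
            = bb μ k r * ∏ a ∈ range k, Nat.factorial (bb ν k a) := by
          rw [← Finset.mul_prod_erase (range k) (fun a => Nat.factorial (bb μ k a))
            (mem_range.mpr hrk),
            ← Finset.mul_prod_erase (range k) (fun a => Nat.factorial (bb ν k a))
            (mem_range.mpr hrk)]
          have hbbr : 0 < bb μ k r := by rw [bb]; omega
          have hfr : Nat.factorial (bb μ k r) = bb μ k r * Nat.factorial (bb ν k r) := by
            rw [hν, bb_erase hr k r, if_pos rfl]
            exact (Nat.mul_factorial_pred hbbr.ne').symm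
          rw [hfr]
          have hrest : ∏ a ∈ (range k).erase r, Nat.factorial (bb μ k a)
              = ∏ a ∈ (range k).erase r, Nat.factorial (bb ν k a) := by
            refine prod_congr rfl fun a ha => ?_
            rw [mem_erase] at ha
            rw [hν, bb_erase hr k a, if_neg ha.1]
          rw [hrest]
          ring
        -- nonzeroness
        have hFν0 : (∏ a ∈ range k, ((Nat.factorial (bb ν k a) : ℕ) : ℚ)) ≠ 0 := by
          apply ne_of_gt
          apply prod_pos
          intro a _
          exact_mod_cast Nat.factorial_pos _
        have hHν0 : ((ydHookProd ν : ℕ) : ℚ) ≠ 0 := by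
          intro hzero
          rw [hzero, zero_mul] at h1
          exact hFν0 h1.symm
        have hP10 : P1 ≠ 0 := by
          rw [hP1def]
          rw [prod_ne_zero_iff]
          intro b hb
          rw [mem_Ioo] at hb
          exact sub_ne_zero_of_ne (ne_of_gt (hBanti r b hb.1 hb.2))
        have hP20 : P2 ≠ 0 := by
          rw [hP2def, prod_ne_zero_iff]
          intro a ha
          rw [mem_range] at ha
          exact sub_ne_zero_of_ne (ne_of_gt (hBanti a r ha hrk))
        have hP1'0 : P1' ≠ 0 := by
          rw [hP1'def, prod_ne_zero_iff]
          intro b hb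
          rw [mem_Ioo] at hb
          have hlt := bb_strict (μ := ν) (k := k) hb.1 hb.2
          have hc1 := hBν r
          have hc2 := hBν b
          rw [if_pos rfl] at hc1
          rw [if_neg (by omega)] at hc2
          have : (bb ν k b : ℚ) < (bb ν k r : ℚ) := by exact_mod_cast hlt
          rw [hc1, hc2] at this
          intro hzero
          have : B r - B b = 1 := by linarith [hzero]
          linarith
        have hP2'0 : P2' ≠ 0 := by
          rw [hP2'def, prod_ne_zero_iff]
          intro a ha
          rw [mem_range] at ha
          have := hBanti a r ha hrk
          intro hzero
          linarith
        have hRest0 : Rest ≠ 0 := by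
          rw [hRestdef, prod_ne_zero_iff]
          intro a ha
          rw [prod_ne_zero_iff]
          intro b hb
          rw [mem_erase, mem_range] at ha
          rw [mem_erase, mem_Ioo] at hb
          exact sub_ne_zero_of_ne (ne_of_gt (hBanti a b hb.2.1 hb.2.2))
        -- assembled equations
        have h2 : ((ydHookProd μ : ℕ) : ℚ) * ((P1 * P2) * Rest)
            = B r * ∏ a ∈ range k, ((Nat.factorial (bb ν k a) : ℕ) : ℚ) := by
          rw [← hDμ, h0]
          have hc := congrArg (Nat.cast (R := ℚ)) hFrel
          push_cast at hc ⊢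
          rw [hc]
        have h3 : ((ydHookProd ν : ℕ) : ℚ) * ((P1' * P2') * Rest)
            = ∏ a ∈ range k, ((Nat.factorial (bb ν k a) : ℕ) : ℚ) := by
          rw [← hDν, h1]
        -- Term * (P1 * P2) = B r * (P1' * P2')
        have hTermP : (∏ j ∈ (range k).erase r, ((B r - B j - 1)/(B r - B j))) * (P1 * P2)
            = P1' * P2' := by
          rw [prod_erase_split k r hrk]
          have e1 : (∏ j ∈ range r, ((B r - B j - 1)/(B r - B j))) * P2 = P2' := by
            rw [hP2def, hP2'def, ← prod_mul_distrib]
            refine prod_congr rfl fun a ha => ?_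
            rw [mem_range] at ha
            have hne : B r - B a ≠ 0 := sub_ne_zero_of_ne (ne_of_lt (hBanti a r ha hrk))
            field_simp
            ring
          have e2 : (∏ j ∈ Ioo r k, ((B r - B j - 1)/(B r - B j))) * P1 = P1' := by
            rw [hP1def, hP1'def, ← prod_mul_distrib]
            refine prod_congr rfl fun b hb => ?_
            rw [mem_Ioo] at hb
            have hne : B r - B b ≠ 0 := sub_ne_zero_of_ne (ne_of_gt (hBanti r b hb.1 hb.2))
            field_simp
          calc (∏ j ∈ range r, ((B r - B j - 1)/(B r - B j)))
                * (∏ j ∈ Ioo r k, ((B r - B j - 1)/(B r - B j))) * (P1 * P2)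
              = ((∏ j ∈ range r, ((B r - B j - 1)/(B r - B j))) * P2)
                * ((∏ j ∈ Ioo r k, ((B r - B j - 1)/(B r - B j))) * P1) := by ring
            _ = P2' * P1' := by rw [e1, e2]
            _ = P1' * P2' := by ring
        -- final cancellation
        set cn : ℚ := (Nat.card (SYT ν) : ℚ) with hcn
        set Hμ : ℚ := ((ydHookProd μ : ℕ) : ℚ) with hHμ
        set Hν : ℚ := ((ydHookProd ν : ℕ) : ℚ) with hHν
        set Fν : ℚ := ∏ a ∈ range k, ((Nat.factorial (bb ν k a) : ℕ) : ℚ) with hFν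
        set T : ℚ := ∏ j ∈ (range k).erase r, ((B r - B j - 1)/(B r - B j)) with hT
        have hZ : Hν * ((P1 * P2) * ((P1' * P2') * Rest)) ≠ 0 := by
          apply mul_ne_zero hHν0
          apply mul_ne_zero (mul_ne_zero hP10 hP20)
          apply mul_ne_zero (mul_ne_zero hP1'0 hP2'0) hRest0
        apply mul_right_cancel₀ hZ
        have hL : cn * Hμ * (Hν * ((P1 * P2) * ((P1' * P2') * Rest)))
            = (Nat.factorial (N-1) : ℚ) * ((P1' * P2') * (B r * Fν)) := by
          calc cn * Hμ * (Hν * ((P1 * P2) * ((P1' * P2') * Rest)))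
              = (cn * Hν) * ((P1' * P2') * (Hμ * ((P1 * P2) * Rest))) := by ring
            _ = (Nat.factorial (N-1) : ℚ) * ((P1' * P2') * (B r * Fν)) := by
                rw [ihq, h2]
        have hR : (Nat.factorial (N-1) : ℚ) * (B r * T)
              * (Hν * ((P1 * P2) * ((P1' * P2') * Rest)))
            = (Nat.factorial (N-1) : ℚ) * ((P1' * P2') * (B r * Fν)) := by
          calc (Nat.factorial (N-1) : ℚ) * (B r * T)
                * (Hν * ((P1 * P2) * ((P1' * P2') * Rest)))
              = (Nat.factorial (N-1) : ℚ) * B r * (T * (P1 * P2))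
                * (Hν * ((P1' * P2') * Rest)) := by ring
            _ = (Nat.factorial (N-1) : ℚ) * B r * (P1' * P2') * Fν := by rw [hTermP, h3]
            _ = (Nat.factorial (N-1) : ℚ) * ((P1' * P2') * (B r * Fν)) := by ring
        rw [hL, hR]
      -- claim B : non-corner rows give zero terms
      have hclaimB : ∀ r ∈ range k, r ∉ CR μ →
          B r * ∏ j ∈ (range k).erase r, ((B r - B j - 1)/(B r - B j)) = 0 := by
        intro r hrk hrnot
        rw [mem_range] at hrk
        have hrow_pos : 0 < μ.rowLen r := rowLen_pos_of_lt_colLen hrk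
        have hle : μ.rowLen r ≤ μ.rowLen (r+1) := by
          by_contra hcon
          exact hrnot (mem_CR_iff.mpr ⟨hrk, by omega⟩)
        have heq : μ.rowLen (r+1) = μ.rowLen r :=
          le_antisymm (μ.rowLen_anti r (r+1) (by omega)) hle
        have hr1k : r + 1 < k := by
          have : (r+1, 0) ∈ μ := YoungDiagram.mem_iff_lt_rowLen.mpr (by omega)
          have := YoungDiagram.mem_iff_lt_colLen.mp this
          have := lt_of_lt_of_le this (μ.colLen_anti 0 0 le_rfl)
          omega
        have hmem : r + 1 ∈ (range k).erase r := by
          rw [mem_erase, mem_range]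
          exact ⟨by omega, hr1k⟩
        have hzero : B r - B (r+1) - 1 = 0 := by
          have h1 : bb μ k r = bb μ k (r+1) + 1 := by
            rw [bb, bb, heq]
            omega
          show ((bb μ k r : ℕ) : ℚ) - ((bb μ k (r+1) : ℕ) : ℚ) - 1 = 0
          rw [h1]
          push_cast
          ring
        rw [Finset.prod_eq_zero hmem (by rw [hzero, zero_div]), mul_zero]
      -- recurrence, cast
      have hrec := SYT_recurrence μ hposc
      have hstep : (Nat.card (SYT μ) : ℚ) * ((ydHookProd μ : ℕ) : ℚ)
          = ∑ r ∈ CR μ, (Nat.card (SYT (eraseCell μ (r, μ.rowLen r - 1))) : ℚ)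
              * ((ydHookProd μ : ℕ) : ℚ) := by
        rw [← sum_mul]
        congr 1
        rw [hrec]
        push_cast
        rfl
      have hCRsub : CR μ ⊆ range k := fun r hr => mem_range.mpr (mem_CR_iff.mp hr).1
      have hfinal : (Nat.card (SYT μ) : ℚ) * ((ydHookProd μ : ℕ) : ℚ)
          = (Nat.factorial (N-1) : ℚ) * (N : ℚ) := by
        rw [hstep, sum_congr rfl hclaimA, ← mul_sum,
          sum_subset hCRsub (fun r h1 h2 => hclaimB r h1 h2),
          corner_sum_identity k B hBinj]
        congr 1
        -- ∑ B - k(k-1)/2 = N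
        have hsplit : ∑ a ∈ range k, B a
            = (N : ℚ) + ((∑ a ∈ range k, (k - 1 - a) : ℕ) : ℚ) := by
          rw [hB]
          have : ∀ a ∈ range k, ((bb μ k a : ℕ) : ℚ)
              = ((μ.rowLen a : ℕ) : ℚ) + (((k - 1 - a) : ℕ) : ℚ) := by
            intro a _
            rw [bb]
            push_cast
            ring
          rw [sum_congr rfl this, sum_add_distrib, hNsum]
          push_cast
          ring
        have hgauss : ((∑ a ∈ range k, (k - 1 - a) : ℕ) : ℚ) = (k : ℚ) * ((k : ℚ) - 1) / 2 := by
          have h1 : ∑ a ∈ range k, (k - 1 - a) = ∑ a ∈ range k, a := by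
            exact Finset.sum_range_reflect (fun x => x) k
          have h2 := Finset.sum_range_id_mul_two k
          rw [h1]
          have h3 : ((∑ a ∈ range k, a) * 2 : ℕ) = k * (k-1) := h2
          have h4 : (((∑ a ∈ range k, a) * 2 : ℕ) : ℚ) = ((k * (k-1) : ℕ) : ℚ) := by
            exact_mod_cast congrArg (Nat.cast (R := ℚ)) h3
          push_cast [Nat.cast_sub (by omega : 1 ≤ k)] at h4 ⊢
          linarith
        rw [hsplit, hgauss]
        ring
      -- conclude in ℕ
      have hNfac : Nat.factorial (N-1) * N = Nat.factorial N := by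
        rw [Nat.mul_comm]
        exact Nat.mul_factorial_pred hpos.ne'
      have : (Nat.card (SYT μ) * ydHookProd μ : ℕ) = ((Nat.factorial (N-1) * N : ℕ)) := by
        exact_mod_cast hfinal
      rw [this, hNfac]

end HLF

/-- The Frame–Robinson–Thrall hook length formula: the number of standard Young
tableaux of shape `μ` (bijective fillings of the boxes of `μ` by `1, …, N` with
`N = |μ|`, strictly increasing along rows and columns) equals `N!/h_μ`, stated
multiplicatively. -/
theorem hook_length_formula (μ : YoungDiagram) :
    Nat.card {f : μ.cells → Fin μ.cells.card //
        Function.Bijective f ∧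
          (∀ c d : μ.cells, (c : ℕ × ℕ).1 = (d : ℕ × ℕ).1 →
            (c : ℕ × ℕ).2 < (d : ℕ × ℕ).2 → f c < f d) ∧
          (∀ c d : μ.cells, (c : ℕ × ℕ).2 = (d : ℕ × ℕ).2 →
            (c : ℕ × ℕ).1 < (d : ℕ × ℕ).1 → f c < f d)} *
      ydHookProd μ
    = Nat.factorial μ.cells.card :=
  HLF.main_aux μ.cells.card μ rfl
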